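/- Let n = g_{−s} ⊕ ⋯ ⊕ g_{−1} be a stratified nilpotent Lie algebra over a field 𝕜 (𝕜 = ℝ or ℂ). If there exists a nonzero X ∈ g_{−1} such that ad X : n → n has rank at most 1, then h₀(n) contains a derivation of rank 1. -/

import Mathlib

/-- Let `n = g_{−s} ⊕ ⋯ ⊕ g_{−1}` be a stratified nilpotent Lie algebra over `𝕜` (`ℝ` or
`ℂ`), encoded by subspaces `g i = g_{−i}` for `1 ≤ i ≤ s` (with `g 0 = ⊥` and `g m = ⊥`
for `m > s`).  If there exists a nonzero `X ∈ g_{−1}` such that `ad X` has rank at most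
1, then `h₀(n)` contains a derivation of rank 1, i.e. a derivation `φ` with
`φ(g_{−1}) ⊆ g_{−1}`, `φ(g_{−j}) = 0` for `2 ≤ j ≤ s`, and one-dimensional image. -/
theorem statement11 {𝕜 L : Type*} [RCLike 𝕜] [LieRing L] [LieAlgebra 𝕜 L]
    [Module.Finite 𝕜 L]
    (s : ℕ) (hs : 1 ≤ s) (g : ℕ → Submodule 𝕜 L)
    (hg0 : g 0 = ⊥) (hgtop : ∀ m, s < m → g m = ⊥)
    (hsup : (⨆ i, g i) = ⊤)
    (hindep : ∀ i, Disjoint (g i) (⨆ j, ⨆ _ : j ≠ i, g j))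
    (hbrk : ∀ i j, ∀ X ∈ g i, ∀ Y ∈ g j, ⁅X, Y⁆ ∈ g (i + j))
    (hgen : ∀ j, 1 ≤ j → j + 1 ≤ s →
      g (j + 1) = Submodule.span 𝕜 {Z | ∃ X ∈ g 1, ∃ Y ∈ g j, ⁅X, Y⁆ = Z})
    (X : L) (hX : X ∈ g 1) (hX0 : X ≠ 0)
    (had : Module.finrank 𝕜 (LinearMap.range (LieAlgebra.ad 𝕜 L X)) ≤ 1) :
    ∃ φ : L →ₗ[𝕜] L,
      (∀ Y Z : L, φ ⁅Y, Z⁆ = ⁅φ Y, Z⁆ + ⁅Y, φ Z⁆) ∧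
      (∀ Y ∈ g 1, φ Y ∈ g 1) ∧
      (∀ j, 2 ≤ j → j ≤ s → ∀ Y ∈ g j, φ Y = 0) ∧
      Module.finrank 𝕜 (LinearMap.range φ) = 1 := by
  classical
  set M : Submodule 𝕜 L := ⨆ j, ⨆ _ : j ≠ 1, g j with hM_def
  have hM : ∀ j, j ≠ 1 → g j ≤ M := fun j hj =>
    le_iSup_of_le j (le_iSup (fun _ : j ≠ 1 => g j) hj)
  have hmemtop : ∀ Y : L, Y ∈ ⨆ i, g i := fun Y => by rw [hsup]; exact Submodule.mem_top
  -- all brackets land in M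
  have hbrkM : ∀ Y Z : L, ⁅Y, Z⁆ ∈ M := by
    have step : ∀ i, ∀ Y ∈ g i, ∀ Z : L, ⁅Y, Z⁆ ∈ M := by
      intro i Y hY Z
      refine Submodule.iSup_induction (motive := fun Z => ⁅Y, Z⁆ ∈ M) g (hmemtop Z) ?_ ?_ ?_
      · intro j z hz
        rcases eq_or_ne (i + j) 1 with h1 | h1
        · rcases Nat.add_eq_one_iff.mp h1 with ⟨hi, _⟩ | ⟨_, hj⟩
          · subst hi; rw [hg0, Submodule.mem_bot] at hY; simp [hY, M.zero_mem]
          · subst hj; rw [hg0, Submodule.mem_bot] at hz; simp [hz, M.zero_mem]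
        · exact hM _ h1 (hbrk i j Y hY z hz)
      · simp [M.zero_mem]
      · intro a b ha hb; rw [lie_add]; exact M.add_mem ha hb
    intro Y Z
    refine Submodule.iSup_induction (motive := fun Y => ⁅Y, Z⁆ ∈ M) g (hmemtop Y) ?_ ?_ ?_
    · intro i Y hY; exact step i Y hY Z
    · simp [M.zero_mem]
    · intro a b ha hb; rw [add_lie]; exact M.add_mem ha hb
  -- generic construction from a suitable functional
  have build : ∀ f : L →ₗ[𝕜] 𝕜, (∀ m ∈ M, f m = 0) →
      (∀ Y Z : L, f Y • ⁅X, Z⁆ = f Z • ⁅X, Y⁆) → f ≠ 0 →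
      ∃ φ : L →ₗ[𝕜] L,
        (∀ Y Z : L, φ ⁅Y, Z⁆ = ⁅φ Y, Z⁆ + ⁅Y, φ Z⁆) ∧
        (∀ Y ∈ g 1, φ Y ∈ g 1) ∧
        (∀ j, 2 ≤ j → j ≤ s → ∀ Y ∈ g j, φ Y = 0) ∧
        Module.finrank 𝕜 (LinearMap.range φ) = 1 := by
    intro f hker hsym hf0
    refine ⟨f.smulRight X, ?_, ?_, ?_, ?_⟩
    · intro Y Z
      simp only [LinearMap.smulRight_apply]
      rw [hker _ (hbrkM Y Z), zero_smul, smul_lie, lie_smul, hsym Y Z, ← smul_add]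
      rw [show ⁅X, Y⁆ + ⁅Y, X⁆ = 0 by rw [← lie_skew X Y]; abel, smul_zero]
    · intro Y _
      exact Submodule.smul_mem _ _ hX
    · intro j h2 _ Y hY
      simp [LinearMap.smulRight_apply, hker Y (hM j (by omega) hY)]
    · have hrange : LinearMap.range (f.smulRight X) = 𝕜 ∙ X := by
        apply le_antisymm
        · rintro _ ⟨Y, rfl⟩
          exact Submodule.smul_mem _ _ (Submodule.mem_span_singleton_self X)
        · rw [Submodule.span_singleton_le_iff_mem]
          obtain ⟨Y, hY⟩ : ∃ Y, f Y ≠ 0 := by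
            by_contra h; push_neg at h
            exact hf0 (LinearMap.ext fun y => h y)
          exact ⟨(f Y)⁻¹ • Y, by
            simp [LinearMap.smulRight_apply, smul_smul, inv_mul_cancel₀ hY]⟩
      rw [hrange, finrank_span_singleton hX0]
  by_cases hc : ∀ Y ∈ g 1, ⁅X, Y⁆ = 0
  · -- X is central
    have hcent : ∀ Z : L, ⁅X, Z⁆ = 0 := by
      have hj : ∀ j, ∀ Z ∈ g j, ⁅X, Z⁆ = 0 := by
        intro j
        induction j with
        | zero => intro Z hZ; rw [hg0, Submodule.mem_bot] at hZ; simp [hZ]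
        | succ k ih =>
          rcases Nat.eq_zero_or_pos k with rfl | hk
          · exact hc
          by_cases hks : k + 1 ≤ s
          · intro Z hZ
            rw [hgen k hk hks] at hZ
            induction hZ using Submodule.span_induction with
            | mem z hz =>
              obtain ⟨a, ha, b, hb, rfl⟩ := hz
              rw [leibniz_lie, hc a ha, ih b hb]; simp
            | zero => simp
            | add a b _ _ ha hb => rw [lie_add, ha, hb, add_zero]
            | smul c a _ ha => rw [lie_smul, ha, smul_zero]
          · intro Z hZ
            rw [hgtop (k + 1) (by omega), Submodule.mem_bot] at hZ; simp [hZ]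
      intro Z
      refine Submodule.iSup_induction (motive := fun Z => ⁅X, Z⁆ = 0) g (hmemtop Z) hj (by simp) ?_
      intro a b ha hb; rw [lie_add, ha, hb, add_zero]
    have hXM : X ∉ M := by
      intro hXm
      exact hX0 (Submodule.disjoint_def.mp (hindep 1) X hX hXm)
    have hxq : (Submodule.mkQ M) X ≠ 0 := by
      simpa [Submodule.Quotient.mk_eq_zero] using hXM
    obtain ⟨gq, hgq⟩ := LinearMap.exists_leftInverse_of_injective
      (LinearMap.toSpanSingleton 𝕜 _ ((Submodule.mkQ M) X))
      (LinearMap.ker_toSpanSingleton 𝕜 hxq)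
    set f : L →ₗ[𝕜] 𝕜 := gq ∘ₗ Submodule.mkQ M with hf_def
    have hfX : f X = 1 := by
      have := LinearMap.ext_iff.mp hgq 1
      simpa [hf_def, LinearMap.toSpanSingleton_apply] using this
    have hfM : ∀ m ∈ M, f m = 0 := by
      intro m hm
      have : (Submodule.mkQ M) m = 0 := by
        simpa [Submodule.Quotient.mk_eq_zero] using hm
      simp [hf_def, this]
    refine build f hfM (fun Y Z => by simp [hcent]) ?_
    intro h
    rw [h] at hfX; simp at hfX
  · -- [X, g 1] ≠ 0
    push_neg at hc
    obtain ⟨Y0, hY0g, hW0⟩ := hc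
    set W : L := ⁅X, Y0⁆ with hW_def
    have hW2 : W ∈ g 2 := hbrk 1 1 X hX Y0 hY0g
    have hle : (𝕜 ∙ W) ≤ LinearMap.range (LieAlgebra.ad 𝕜 L X) := by
      rw [Submodule.span_singleton_le_iff_mem]
      exact ⟨Y0, rfl⟩
    have heq : (𝕜 ∙ W) = LinearMap.range (LieAlgebra.ad 𝕜 L X) := by
      refine Submodule.eq_of_le_of_finrank_le hle ?_
      rw [finrank_span_singleton hW0]
      exact had
    set ν : L →ₗ[𝕜] (𝕜 ∙ W) := (LieAlgebra.ad 𝕜 L X).codRestrict (𝕜 ∙ W)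
      (fun Y => heq ▸ LinearMap.mem_range_self _ Y) with hν_def
    set μ : L →ₗ[𝕜] 𝕜 := (LinearEquiv.coord 𝕜 L W hW0).toLinearMap ∘ₗ ν with hμ_def
    have hμ : ∀ Y : L, ⁅X, Y⁆ = μ Y • W := by
      intro Y
      have h1 : μ Y • W = ((ν Y : 𝕜 ∙ W) : L) :=
        LinearEquiv.coord_apply_smul 𝕜 L W hW0 (ν Y)
      rw [h1]; rfl
    have hμ0 : ∀ j, j ≠ 1 → ∀ Z ∈ g j, μ Z = 0 := by
      intro j hj Z hZ
      rcases eq_or_ne j 0 with rfl | hj0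
      · rw [hg0, Submodule.mem_bot] at hZ; simp [hZ]
      have h1 : ⁅X, Z⁆ ∈ g (1 + j) := hbrk 1 j X hX Z hZ
      have h2 : ⁅X, Z⁆ ∈ g 2 := by
        rw [hμ Z]; exact Submodule.smul_mem _ _ hW2
      have h3 : ⁅X, Z⁆ ∈ ⨆ k, ⨆ _ : k ≠ 2, g k :=
        (le_iSup_of_le (1 + j) (le_iSup (fun _ : 1 + j ≠ 2 => g (1 + j)) (by omega)) :
          g (1 + j) ≤ ⨆ k, ⨆ _ : k ≠ 2, g k) h1
      have h4 : ⁅X, Z⁆ = 0 := Submodule.disjoint_def.mp (hindep 2) _ h2 h3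
      rw [hμ Z] at h4
      rcases smul_eq_zero.mp h4 with h | h
      · exact h
      · exact absurd h hW0
    have hμM : ∀ m ∈ M, μ m = 0 := by
      intro m hm
      have : M ≤ LinearMap.ker μ := by
        refine iSup_le fun j => iSup_le fun hj => ?_
        intro z hz
        exact LinearMap.mem_ker.mpr (hμ0 j hj z hz)
      exact LinearMap.mem_ker.mp (this hm)
    have hμsym : ∀ Y Z : L, μ Y • ⁅X, Z⁆ = μ Z • ⁅X, Y⁆ := by
      intro Y Z
      rw [hμ Z, hμ Y, smul_smul, smul_smul, mul_comm]
    have hμne : μ ≠ 0 := by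
      intro h
      apply hW0
      have := hμ Y0
      rw [h] at this
      simpa using this
    exact build μ hμM hμsym hμne
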